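/- Let β ∈ ℂ with Re(β) > 0. With φ_{β,k}(x) = He_{k−1}(√β x)e^{−βx²/2}, one has ∫_ℝ φ_{\bar β,k}(x)\,φ_{β,1}(x)\,dx = √(π/β) if k = 1, and = 0 if k ≠ 1. In particular ⟨φ_{\bar β,1}, φ_{β,1}⟩ ≠ 0. -/

import Mathlib

open MeasureTheory Filter Set

/-- The `j`-th (physicists') Hermite function value:
`He_j(z) = (-1)^j e^{z²} (d/dz)^j e^{-z²}`. -/
noncomputable def hermiteHe (j : ℕ) (z : ℂ) : ℂ :=
  (-1 : ℂ) ^ j * Complex.exp (z ^ 2) *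
    iteratedDeriv j (fun w : ℂ => Complex.exp (-w ^ 2)) z

/-- `φ_{β,k}(x) = He_{k-1}(√β x) e^{-β x²/2}`, with `√β` the principal root. -/
noncomputable def daviesEigenfun (β : ℂ) (k : ℕ) (x : ℝ) : ℂ :=
  hermiteHe (k - 1) (β ^ ((1 : ℂ) / 2) * (x : ℂ)) * Complex.exp (-β * (x : ℂ) ^ 2 / 2)

noncomputable def gp : ℕ → Polynomial ℂ
  | 0 => 1
  | (j+1) => (gp j).derivative - Polynomial.C 2 * Polynomial.X * gp j

lemma gp_map_conj (j : ℕ) : (gp j).map (starRingEnd ℂ) = gp j := by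
  induction j with
  | zero => simp [gp]
  | succ j ih =>
    rw [gp, Polynomial.map_sub, Polynomial.map_mul, Polynomial.map_mul, Polynomial.map_C,
      Polynomial.map_X, ← Polynomial.derivative_map, ih, map_ofNat]

lemma gp_eval (j : ℕ) (z : ℂ) :
    iteratedDeriv j (fun w : ℂ => Complex.exp (-w ^ 2)) z
      = (gp j).eval z * Complex.exp (-z ^ 2) := by
  induction j generalizing z with
  | zero => simp [gp]
  | succ j ih =>
    rw [iteratedDeriv_succ]
    have hfun : iteratedDeriv j (fun w : ℂ => Complex.exp (-w ^ 2))
        = fun z => (gp j).eval z * Complex.exp (-z ^ 2) := funext ih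
    rw [hfun]
    have h : HasDerivAt (fun z : ℂ => (gp j).eval z * Complex.exp (-z ^ 2))
        ((gp (j+1)).eval z * Complex.exp (-z ^ 2)) z := by
      have hg : HasDerivAt (fun w : ℂ => Complex.exp (-w ^ 2))
          (Complex.exp (-z ^ 2) * -(2 * z)) z := by
        have h2 : HasDerivAt (fun w : ℂ => -w ^ 2) (-(2 * z)) z := by
          simpa using (hasDerivAt_pow 2 z).fun_neg
        exact h2.cexp
      have := ((gp j).hasDerivAt z).fun_mul hg
      refine this.congr_deriv ?_
      simp only [gp, Polynomial.eval_sub, Polynomial.eval_mul, Polynomial.eval_C,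
        Polynomial.eval_X]
      ring
    exact h.deriv

lemma hermiteHe_eq (j : ℕ) (z : ℂ) : hermiteHe j z = (-1 : ℂ) ^ j * (gp j).eval z := by
  have hx : Complex.exp (z ^ 2) * Complex.exp (-z ^ 2) = 1 := by
    rw [← Complex.exp_add]; simp
  rw [hermiteHe, gp_eval]
  calc (-1 : ℂ) ^ j * Complex.exp (z ^ 2) * ((gp j).eval z * Complex.exp (-z ^ 2))
      = (-1 : ℂ) ^ j * (gp j).eval z * (Complex.exp (z ^ 2) * Complex.exp (-z ^ 2)) := by ring
    _ = (-1 : ℂ) ^ j * (gp j).eval z := by rw [hx, mul_one]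

lemma conj_hermiteHe (j : ℕ) (z : ℂ) :
    (starRingEnd ℂ) (hermiteHe j z) = hermiteHe j ((starRingEnd ℂ) z) := by
  rw [hermiteHe_eq, hermiteHe_eq, map_mul]
  congr 1
  · simp
  · conv_rhs => rw [← gp_map_conj j]
    rw [Polynomial.eval_map]
    exact (Polynomial.eval₂_at_apply (starRingEnd ℂ) z).symm

section helpers

variable {β : ℂ}

lemma base_integrable (hβ : 0 < β.re) (i : ℕ) :
    Integrable fun x : ℝ => (x : ℂ) ^ i * Complex.exp (-β * (x : ℂ) ^ 2) := by
  have hi : (-1 : ℝ) < (i : ℝ) := lt_of_lt_of_le (by norm_num) (Nat.cast_nonneg i)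
  have hreal : Integrable fun x : ℝ => x ^ i * Real.exp (-β.re * x ^ 2) := by
    have := integrable_rpow_mul_exp_neg_mul_sq hβ hi
    refine this.congr (Filter.Eventually.of_forall fun x => ?_)
    simp [Real.rpow_natCast]
  refine Integrable.mono' hreal.norm ?_ ?_
  · exact ((Complex.continuous_ofReal.pow i).mul
      (Complex.continuous_exp.comp
        (continuous_const.mul (Complex.continuous_ofReal.pow 2)))).aestronglyMeasurable
  · refine Filter.Eventually.of_forall fun x => ?_
    rw [norm_mul, norm_pow, Complex.norm_real, norm_cexp_neg_mul_sq, Real.norm_eq_abs,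
      Real.norm_eq_abs, abs_mul, abs_pow, abs_of_pos (Real.exp_pos _)]

lemma base_tendsto (hβ : 0 < β.re) (i : ℕ) :
    Tendsto (fun x : ℝ => (x : ℂ) ^ i * Complex.exp (-β * (x : ℂ) ^ 2))
      (cocompact ℝ) (nhds 0) := by
  rw [tendsto_zero_iff_norm_tendsto_zero]
  have h := tendsto_rpow_abs_mul_exp_neg_mul_sq_cocompact hβ (i : ℝ)
  refine h.congr fun x => ?_
  rw [norm_mul, norm_pow, Complex.norm_real, norm_cexp_neg_mul_sq, Real.norm_eq_abs,
    Real.rpow_natCast]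

lemma poly_gauss_expand (p : Polynomial ℂ) (c : ℂ) :
    (fun x : ℝ => p.eval (c * x) * Complex.exp (-β * (x : ℂ) ^ 2))
      = fun x : ℝ => ∑ i ∈ Finset.range (p.natDegree + 1),
          (p.coeff i * c ^ i) * ((x : ℂ) ^ i * Complex.exp (-β * (x : ℂ) ^ 2)) := by
  funext x
  rw [Polynomial.eval_eq_sum_range, Finset.sum_mul]
  refine Finset.sum_congr rfl fun i _ => ?_
  rw [mul_pow]; ring

lemma poly_gauss_integrable (hβ : 0 < β.re) (p : Polynomial ℂ) (c : ℂ) :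
    Integrable fun x : ℝ => p.eval (c * x) * Complex.exp (-β * (x : ℂ) ^ 2) := by
  rw [poly_gauss_expand]
  exact integrable_finset_sum _ fun i _ => (base_integrable hβ i).const_mul _

lemma poly_gauss_tendsto (hβ : 0 < β.re) (p : Polynomial ℂ) (c : ℂ) :
    Tendsto (fun x : ℝ => p.eval (c * x) * Complex.exp (-β * (x : ℂ) ^ 2))
      (cocompact ℝ) (nhds 0) := by
  rw [poly_gauss_expand]
  have : Tendsto (fun x : ℝ => ∑ i ∈ Finset.range (p.natDegree + 1),
      (p.coeff i * c ^ i) * ((x : ℂ) ^ i * Complex.exp (-β * (x : ℂ) ^ 2)))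
      (cocompact ℝ)
      (nhds (∑ i ∈ Finset.range (p.natDegree + 1), (p.coeff i * c ^ i) * 0)) :=
    tendsto_finset_sum _ fun i _ => (base_tendsto hβ i).const_mul _
  simpa using this

lemma integral_gp_succ_zero (hβ : 0 < β.re) (m : ℕ) :
    ∫ x : ℝ, (gp (m+1)).eval (β ^ ((1 : ℂ) / 2) * x) * Complex.exp (-β * (x : ℂ) ^ 2) = 0 := by
  have hβ0 : β ≠ 0 := fun h => by simp [h] at hβ
  set c : ℂ := β ^ ((1 : ℂ) / 2) with hc
  have hc0 : c ≠ 0 := by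
    rw [hc, Ne, Complex.cpow_eq_zero_iff]
    simp [hβ0]
  have hcc : c * c = β := by
    rw [hc, ← Complex.cpow_add _ _ hβ0]
    norm_num
  set F : ℝ → ℂ := fun x => c⁻¹ * ((gp m).eval (c * x) * Complex.exp (-β * (x : ℂ) ^ 2))
    with hF_def
  set G : ℝ → ℂ := fun x => (gp (m+1)).eval (c * x) * Complex.exp (-β * (x : ℂ) ^ 2)
    with hG_def
  have hF : ∀ x : ℝ, HasDerivAt F (G x) x := by
    intro x
    have hH : HasDerivAt (fun w : ℂ => c⁻¹ * ((gp m).eval (c * w) * Complex.exp (-β * w ^ 2)))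
        ((gp (m+1)).eval (c * (x : ℂ)) * Complex.exp (-β * (x : ℂ) ^ 2)) (x : ℂ) := by
      have hu : HasDerivAt (fun w : ℂ => (gp m).eval (c * w))
          (c * (gp m).derivative.eval (c * (x : ℂ))) (x : ℂ) := by
        have h1 : HasDerivAt (fun w : ℂ => c * w) c (x : ℂ) := by
          simpa using (hasDerivAt_id (x : ℂ)).const_mul c
        have := ((gp m).hasDerivAt (c * (x : ℂ))).comp (x : ℂ) h1
        simpa [Function.comp_def, mul_comm] using this
      have hv : HasDerivAt (fun w : ℂ => Complex.exp (-β * w ^ 2))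
          (Complex.exp (-β * (x : ℂ) ^ 2) * (-β * (2 * (x : ℂ)))) (x : ℂ) := by
        have h2 : HasDerivAt (fun w : ℂ => -β * w ^ 2) (-β * (2 * (x : ℂ))) (x : ℂ) := by
          simpa using (hasDerivAt_pow 2 (x : ℂ)).const_mul (-β)
        exact h2.cexp
      have hmul := (hu.fun_mul hv).const_mul c⁻¹
      refine hmul.congr_deriv ?_
      simp only [gp, Polynomial.eval_sub, Polynomial.eval_mul, Polynomial.eval_C,
        Polynomial.eval_X]
      rw [← hcc]
      field_simp
      ring
    exact hH.comp_ofReal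
  have htend : Tendsto F (cocompact ℝ) (nhds 0) := by
    have := (poly_gauss_tendsto hβ (gp m) c).const_mul c⁻¹
    simpa [hF_def] using this
  have htop : Tendsto F atTop (nhds 0) :=
    htend.mono_left (by rw [cocompact_eq_atBot_atTop]; exact le_sup_right)
  have hbot : Tendsto F atBot (nhds 0) :=
    htend.mono_left (by rw [cocompact_eq_atBot_atTop]; exact le_sup_left)
  have hGint : Integrable G := poly_gauss_integrable hβ _ _
  have h1 : ∫ x in Ioi (0 : ℝ), G x = 0 - F 0 :=
    integral_Ioi_of_hasDerivAt_of_tendsto (hF 0).continuousAt.continuousWithinAt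
      (fun x _ => hF x) hGint.integrableOn htop
  have h2 : ∫ x in Iic (0 : ℝ), G x = F 0 - 0 :=
    integral_Iic_of_hasDerivAt_of_tendsto (hF 0).continuousAt.continuousWithinAt
      (fun x _ => hF x) hGint.integrableOn hbot
  have := intervalIntegral.integral_Iic_add_Ioi (μ := volume) (b := (0 : ℝ)) (f := G)
    hGint.integrableOn hGint.integrableOn
  rw [h1, h2] at this
  rw [← this]
  ring

lemma conj_sqrt (hβ : 0 < β.re) :
    (starRingEnd ℂ) (((starRingEnd ℂ) β) ^ ((1 : ℂ) / 2)) = β ^ ((1 : ℂ) / 2) := by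
  have harg : β.arg ≠ Real.pi := by
    intro h
    rw [Complex.arg_eq_pi_iff] at h
    linarith [h.1]
  have h12 : (starRingEnd ℂ) ((1 : ℂ) / 2) = (1 : ℂ) / 2 := by
    simp [map_ofNat]
  have := Complex.conj_cpow β ((1 : ℂ) / 2) harg
  rw [h12] at this
  rw [this, Complex.conj_conj]

lemma integrand_eq (hβ : 0 < β.re) (k : ℕ) (x : ℝ) :
    (starRingEnd ℂ) (daviesEigenfun ((starRingEnd ℂ) β) k x) * daviesEigenfun β 1 x
      = (-1 : ℂ) ^ (k - 1) *
        ((gp (k - 1)).eval (β ^ ((1 : ℂ) / 2) * x) * Complex.exp (-β * (x : ℂ) ^ 2)) := by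
  have h1 : daviesEigenfun β 1 x = Complex.exp (-β * (x : ℂ) ^ 2 / 2) := by
    rw [daviesEigenfun]
    norm_num [hermiteHe_eq, gp]
  rw [daviesEigenfun, h1, map_mul, conj_hermiteHe, ← Complex.exp_conj]
  have hz : (starRingEnd ℂ) (((starRingEnd ℂ) β) ^ ((1 : ℂ) / 2) * (x : ℂ))
      = β ^ ((1 : ℂ) / 2) * (x : ℂ) := by
    rw [map_mul, conj_sqrt hβ, Complex.conj_ofReal]
  have he : (starRingEnd ℂ) (-(starRingEnd ℂ) β * (x : ℂ) ^ 2 / 2)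
      = -β * (x : ℂ) ^ 2 / 2 := by
    rw [map_div₀, map_mul, map_neg, Complex.conj_conj, map_pow, Complex.conj_ofReal,
      map_ofNat]
  rw [hz, he, hermiteHe_eq, mul_assoc, mul_assoc, ← Complex.exp_add]
  congr 2
  ring_nf

lemma key_integral (hβ : 0 < β.re) (k : ℕ) (hk : 1 ≤ k) :
    (∫ x : ℝ, (starRingEnd ℂ) (daviesEigenfun ((starRingEnd ℂ) β) k x) *
        daviesEigenfun β 1 x)
      = if k = 1 then ((Real.pi : ℂ) / β) ^ ((1 : ℂ) / 2) else 0 := by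
  have hrw : (fun x : ℝ => (starRingEnd ℂ) (daviesEigenfun ((starRingEnd ℂ) β) k x) *
      daviesEigenfun β 1 x)
      = fun x : ℝ => (-1 : ℂ) ^ (k - 1) *
        ((gp (k - 1)).eval (β ^ ((1 : ℂ) / 2) * x) * Complex.exp (-β * (x : ℂ) ^ 2)) :=
    funext (integrand_eq hβ k)
  rw [hrw]
  simp_rw [integral_const_mul]
  rcases k with _ | _ | m
  · omega
  · simp only [if_pos rfl, pow_zero, one_mul]
    have h0 : (fun x : ℝ => (gp (1 - 1)).eval (β ^ ((1 : ℂ) / 2) * x) *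
        Complex.exp (-β * (x : ℂ) ^ 2))
        = fun x : ℝ => Complex.exp (-β * (x : ℂ) ^ 2) := by
      funext x
      norm_num [gp]
    rw [h0, integral_gaussian_complex hβ]
    norm_num
  · rw [if_neg (by omega)]
    rw [show (m + 2 - 1) = m + 1 from rfl, integral_gp_succ_zero hβ m, mul_zero]

end helpers

/-- For `Re β > 0` and `k ≥ 1`:
`⟨φ_{β̄,k}, φ_{β,1}⟩ = √(π/β)` if `k = 1` and `0` otherwise; in particular
`⟨φ_{β̄,1}, φ_{β,1}⟩ ≠ 0`. -/
theorem stmt9 (β : ℂ) (hβ : 0 < β.re) (k : ℕ) (hk : 1 ≤ k) :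
    ((∫ x : ℝ, (starRingEnd ℂ) (daviesEigenfun ((starRingEnd ℂ) β) k x) *
        daviesEigenfun β 1 x) =
      if k = 1 then ((Real.pi : ℂ) / β) ^ ((1 : ℂ) / 2) else 0) ∧
    (∫ x : ℝ, (starRingEnd ℂ) (daviesEigenfun ((starRingEnd ℂ) β) 1 x) *
        daviesEigenfun β 1 x) ≠ 0 := by
  have hβ0 : β ≠ 0 := fun h => by simp [h] at hβ
  refine ⟨key_integral hβ k hk, ?_⟩
  rw [key_integral hβ 1 le_rfl, if_pos rfl, Ne, Complex.cpow_eq_zero_iff]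
  simp only [div_eq_zero_iff, not_and_or, not_or]
  left
  constructor
  · exact_mod_cast Real.pi_ne_zero
  · exact hβ0
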